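/- arXiv:2001.04629 — 2 statements merged into one kernel-verified Lean document; each statement's English description precedes it below -/
import Mathlib

section
/- Let t_1 < t_2 < ⋯ < t_{g+1} be real numbers. Suppose ℙ(T ≥ t_1) = 1, ℙ(T ≥ t_s) > 0 for every s ∈ {1, …, g}, and ℙ(t_s < T < t_{s+1}) = 0 for every s ∈ {1, …, g}. Then the survival probability admits the Kaplan–Meier product decomposition ℙ(T ≥ t_{g+1}) = ∏_{s=1}^{g} (1 − ℙ(T = t_s)/ℙ(T ≥ t_s)). -/
open MeasureTheory

lemma km_key {Ω : Type*} [MeasurableSpace Ω] (μ : Measure Ω)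
    (T : Ω → ℝ) (hT : Measurable T) (a b : ℝ) (hab : a < b)
    (hgap : μ {ω | a < T ω ∧ T ω < b} = 0) :
    μ {ω | a ≤ T ω} = μ {ω | T ω = a} + μ {ω | b ≤ T ω} := by
  have hB : MeasurableSet {ω | b ≤ T ω} := hT measurableSet_Ici
  have hG : MeasurableSet {ω | a < T ω ∧ T ω < b} := by
    have : {ω | a < T ω ∧ T ω < b} = T ⁻¹' (Set.Ioo a b) := rfl
    rw [this]; exact hT measurableSet_Ioo
  have hset : {ω | a ≤ T ω} =
      {ω | T ω = a} ∪ ({ω | a < T ω ∧ T ω < b} ∪ {ω | b ≤ T ω}) := by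
    ext ω
    simp only [Set.mem_setOf_eq, Set.mem_union]
    constructor
    · intro h
      rcases eq_or_lt_of_le h with h' | h'
      · exact Or.inl h'.symm
      · rcases lt_or_ge (T ω) b with h'' | h''
        · exact Or.inr (Or.inl ⟨h', h''⟩)
        · exact Or.inr (Or.inr h'')
    · rintro (h | ⟨h, _⟩ | h)
      · exact le_of_eq h.symm
      · exact le_of_lt h
      · exact hab.le.trans h
  have hd1 : Disjoint {ω | T ω = a} ({ω | a < T ω ∧ T ω < b} ∪ {ω | b ≤ T ω}) := by
    rw [Set.disjoint_left]
    rintro ω (h : T ω = a) (⟨h1, _⟩ | h1)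
    · exact absurd h (ne_of_gt h1)
    · simp only [Set.mem_setOf_eq] at *; rw [h] at h1; exact absurd hab (not_lt.mpr h1)
  have hd2 : Disjoint {ω | a < T ω ∧ T ω < b} {ω | b ≤ T ω} := by
    rw [Set.disjoint_left]
    rintro ω ⟨_, h2⟩ h3
    exact absurd h3 (not_le.mpr h2)
  rw [hset, measure_union hd1 (hG.union hB), measure_union hd2 hB, hgap, zero_add]

/-- Kaplan–Meier product decomposition: if `t 1 < t 2 < ⋯ < t (g+1)`,
`ℙ(T ≥ t 1) = 1`, `ℙ(T ≥ t s) > 0` for `1 ≤ s ≤ g`, and `T` almost surely takes no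
value strictly between consecutive time-points, then
`ℙ(T ≥ t (g+1)) = ∏_{s=1}^{g} (1 − ℙ(T = t s)/ℙ(T ≥ t s))`. -/
theorem kaplan_meier_product {Ω : Type*} [MeasurableSpace Ω] (μ : Measure Ω)
    [IsProbabilityMeasure μ] (T : Ω → ℝ) (hT : Measurable T)
    (g : ℕ) (t : ℕ → ℝ)
    (hmono : ∀ s, 1 ≤ s → s ≤ g → t s < t (s + 1))
    (h1 : μ {ω | t 1 ≤ T ω} = 1)
    (hpos : ∀ s, 1 ≤ s → s ≤ g → 0 < (μ {ω | t s ≤ T ω}).toReal)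
    (hgap : ∀ s, 1 ≤ s → s ≤ g → μ {ω | t s < T ω ∧ T ω < t (s + 1)} = 0) :
    (μ {ω | t (g + 1) ≤ T ω}).toReal =
      ∏ s ∈ Finset.Icc 1 g,
        (1 - (μ {ω | T ω = t s}).toReal / (μ {ω | t s ≤ T ω}).toReal) := by
  induction g with
  | zero => simp [h1]
  | succ g ih =>
    have hle : ∀ s, 1 ≤ s → s ≤ g → s ≤ g + 1 := fun s _ h => h.trans (Nat.le_succ g)
    have ihg := ih (fun s h1' h2 => hmono s h1' (hle s h1' h2))
      (fun s h1' h2 => hpos s h1' (hle s h1' h2))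
      (fun s h1' h2 => hgap s h1' (hle s h1' h2))
    rw [Finset.prod_Icc_succ_top (Nat.one_le_iff_ne_zero.mpr (Nat.succ_ne_zero g)), ← ihg]
    -- key identity at s = g+1
    have hkey := km_key μ T hT (t (g+1)) (t (g+2))
      (hmono (g+1) (Nat.le_add_left 1 g) le_rfl)
      (hgap (g+1) (Nat.le_add_left 1 g) le_rfl)
    have hfinA : μ {ω | T ω = t (g+1)} ≠ ⊤ := measure_ne_top μ _
    have hfinB : μ {ω | t (g+2) ≤ T ω} ≠ ⊤ := measure_ne_top μ _
    have hR : (μ {ω | t (g+1) ≤ T ω}).toReal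
        = (μ {ω | T ω = t (g+1)}).toReal + (μ {ω | t (g+2) ≤ T ω}).toReal := by
      rw [hkey, ENNReal.toReal_add hfinA hfinB]
    have hy := hpos (g+1) (Nat.le_add_left 1 g) le_rfl
    have hy' : (μ {ω | t (g+1) ≤ T ω}).toReal ≠ 0 := ne_of_gt hy
    field_simp
    linarith [hR]
end

section
/- For every t ∈ ℝ with ℙ(C ≥ t) > 0 and E[1_{T ≥ t}·W] ≠ 0, the weighted discrete hazard computed from the censored observations equals the weighted discrete hazard of the true survival time: E[1_{Y = t}·Δ·W] / E[1_{Y ≥ t}·W] = E[1_{T = t}·W] / E[1_{T ≥ t}·W]. -/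
open MeasureTheory

/-- Under non-informative censoring (`C` independent of `(T, W)`), with `Y = min(T, C)`
and `Δ = 1_{T ≤ C}`, if `ℙ(C ≥ t) > 0` and `E[1_{T ≥ t}·W] ≠ 0`, then the weighted
discrete hazard from censored observations equals that of the true survival time:
`E[1_{Y = t}·Δ·W] / E[1_{Y ≥ t}·W] = E[1_{T = t}·W] / E[1_{T ≥ t}·W]`. -/
theorem censored_hazard_eq {Ω : Type*} [MeasurableSpace Ω] (μ : Measure Ω)
    [IsProbabilityMeasure μ] (T C W : Ω → ℝ)
    (hT : Measurable T) (hC : Measurable C) (hW : Measurable W)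
    (hWb : ∃ M, ∀ ω, |W ω| ≤ M)
    (hindep : ProbabilityTheory.IndepFun (fun ω => (T ω, W ω)) C μ)
    (t : ℝ) (hCpos : 0 < (μ {ω | t ≤ C ω}).toReal)
    (hTW : ∫ ω, {ω' | t ≤ T ω'}.indicator (fun _ => (1 : ℝ)) ω * W ω ∂μ ≠ 0) :
    (∫ ω, {ω' | min (T ω') (C ω') = t}.indicator (fun _ => (1 : ℝ)) ω *
        {ω' | T ω' ≤ C ω'}.indicator (fun _ => (1 : ℝ)) ω * W ω ∂μ) /
      (∫ ω, {ω' | t ≤ min (T ω') (C ω')}.indicator (fun _ => (1 : ℝ)) ω * W ω ∂μ)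
      = (∫ ω, {ω' | T ω' = t}.indicator (fun _ => (1 : ℝ)) ω * W ω ∂μ) /
        (∫ ω, {ω' | t ≤ T ω'}.indicator (fun _ => (1 : ℝ)) ω * W ω ∂μ) := by
  -- functions of (T, W) and of C
  set φ₁ : ℝ × ℝ → ℝ := ({p : ℝ × ℝ | p.1 = t}).indicator (fun p => p.2) with hφ₁
  set φ₂ : ℝ × ℝ → ℝ := ({p : ℝ × ℝ | t ≤ p.1}).indicator (fun p => p.2) with hφ₂
  set ψ : ℝ → ℝ := ({x : ℝ | t ≤ x}).indicator (fun _ => (1 : ℝ)) with hψ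
  have hφ₁m : Measurable φ₁ :=
    measurable_snd.indicator (measurable_fst (measurableSet_singleton t))
  have hφ₂m : Measurable φ₂ :=
    measurable_snd.indicator (measurableSet_le measurable_const measurable_fst)
  have hψm : Measurable ψ :=
    measurable_const.indicator (measurableSet_le measurable_const measurable_id)
  have hTWm : Measurable (fun ω => (T ω, W ω)) := hT.prodMk hW
  have hind₁ := hindep.comp hφ₁m hψm
  have hind₂ := hindep.comp hφ₂m hψm
  have hnum : (∫ ω, {ω' | min (T ω') (C ω') = t}.indicator (fun _ => (1 : ℝ)) ω *
        {ω' | T ω' ≤ C ω'}.indicator (fun _ => (1 : ℝ)) ω * W ω ∂μ)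
      = (∫ ω, (φ₁ ∘ fun ω => (T ω, W ω)) ω * (ψ ∘ C) ω ∂μ) := by
    refine integral_congr_ae (Filter.Eventually.of_forall fun ω => ?_)
    simp only [Function.comp_apply, hφ₁, hψ, Set.indicator_apply, Set.mem_setOf_eq]
    by_cases h1 : T ω = t <;> by_cases h2 : t ≤ C ω <;>
      by_cases h3 : T ω ≤ C ω <;> by_cases h4 : min (T ω) (C ω) = t <;>
      simp [h1, h2, h3, h4, min_def] at * <;> first | ring | linarith
  have hden : (∫ ω, {ω' | t ≤ min (T ω') (C ω')}.indicator (fun _ => (1 : ℝ)) ω * W ω ∂μ)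
      = (∫ ω, (φ₂ ∘ fun ω => (T ω, W ω)) ω * (ψ ∘ C) ω ∂μ) := by
    refine integral_congr_ae (Filter.Eventually.of_forall fun ω => ?_)
    simp only [Function.comp_apply, hφ₂, hψ, Set.indicator_apply, Set.mem_setOf_eq, le_min_iff]
    by_cases h1 : t ≤ T ω <;> by_cases h2 : t ≤ C ω <;> simp [h1, h2]
  have hψC : (∫ ω, (ψ ∘ C) ω ∂μ) = (μ {ω | t ≤ C ω}).toReal := by
    have : (fun ω => (ψ ∘ C) ω) = ({ω | t ≤ C ω}).indicator (fun _ => (1 : ℝ)) := by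
      funext ω
      simp [hψ, Set.indicator_apply]
    rw [this]
    rw [integral_indicator_const (1 : ℝ) (measurableSet_le measurable_const hC)]
    simp
    rfl
  have hφ₁TW : (∫ ω, (φ₁ ∘ fun ω => (T ω, W ω)) ω ∂μ)
      = ∫ ω, {ω' | T ω' = t}.indicator (fun _ => (1 : ℝ)) ω * W ω ∂μ := by
    refine integral_congr_ae (Filter.Eventually.of_forall fun ω => ?_)
    simp only [Function.comp_apply, hφ₁, Set.indicator_apply, Set.mem_setOf_eq]
    by_cases h1 : T ω = t <;> simp [h1]
  have hφ₂TW : (∫ ω, (φ₂ ∘ fun ω => (T ω, W ω)) ω ∂μ)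
      = ∫ ω, {ω' | t ≤ T ω'}.indicator (fun _ => (1 : ℝ)) ω * W ω ∂μ := by
    refine integral_congr_ae (Filter.Eventually.of_forall fun ω => ?_)
    simp only [Function.comp_apply, hφ₂, Set.indicator_apply, Set.mem_setOf_eq]
    by_cases h1 : t ≤ T ω <;> simp [h1]
  have hmul₁ := hind₁.integral_fun_mul_eq_mul_integral ((hφ₁m.comp hTWm).aestronglyMeasurable)
      ((hψm.comp hC).aestronglyMeasurable)
  have hmul₂ := hind₂.integral_fun_mul_eq_mul_integral ((hφ₂m.comp hTWm).aestronglyMeasurable)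
      ((hψm.comp hC).aestronglyMeasurable)
  rw [hnum, hden, hmul₁, hmul₂, hψC, hφ₁TW, hφ₂TW,
    mul_div_mul_right _ _ (ne_of_gt hCpos)]
end
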